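/- For a fan graph G consisting of a path on n vertices each additionally joined to a central vertex v, the broadcast time from v satisfies Br(G, v) ≤ 1.5√n + 2, while the broadcast time of the path obtained by deleting v from the source at one of its endpoints equals n − 1. Hence Br(G ∖ {v}, s) = Ω(Br(G, v)²). -/

import Mathlib

/-- Classic telephone broadcasting schedule (one call per informed vertex per round). -/
def IsSchedule {V : Type*} (G : SimpleGraph V) (S : ℕ → Set V) : Prop :=
  ∀ t : ℕ, S t ⊆ S (t + 1) ∧
    ∃ f : V → V,
      (∀ w ∈ S (t + 1) \ S t, f w ∈ S t ∧ G.Adj (f w) w) ∧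
      ∀ u : V, Set.ncard {w | w ∈ S (t + 1) \ S t ∧ f w = u} ≤ 1

/-- The telephone broadcast time `Br(G, s)`. -/
noncomputable def broadcastTime {V : Type*} (G : SimpleGraph V) (s : V) : ℕ :=
  sInf {R | ∃ S : ℕ → Set V, S 0 = {s} ∧ IsSchedule G S ∧ S R = Set.univ}

/-- The fan graph: a path on `n` vertices `some 0, …, some (n-1)` each additionally
joined to the central vertex `none`. -/
def fanGraph (n : ℕ) : SimpleGraph (Option (Fin n)) :=
  SimpleGraph.fromRel (fun x y =>
    (∃ i j : Fin n, x = some i ∧ y = some j ∧ (i : ℕ) + 1 = (j : ℕ)) ∨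
      (x = none ∧ ∃ i : Fin n, y = some i))

/-- Generic: a time/parent labelling gives a schedule. -/
lemma isSchedule_of_time {V : Type*} (G : SimpleGraph V) (τ : V → ℕ) (par : V → V)
    (h1 : ∀ v, τ v ≠ 0 → G.Adj (par v) v ∧ τ (par v) < τ v)
    (h2 : ∀ u t, ({w | τ w = t + 1 ∧ par w = u} : Set V).ncard ≤ 1) :
    IsSchedule G (fun t => {v | τ v ≤ t}) := by
  intro t
  refine ⟨fun v hv => by simpa using Nat.le_succ_of_le hv, par, ?_, ?_⟩
  · intro w hw
    have hτ : τ w = t + 1 := by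
      simp only [Set.mem_diff, Set.mem_setOf_eq] at hw; omega
    obtain ⟨hadj, hlt⟩ := h1 w (by omega)
    exact ⟨by simp only [Set.mem_setOf_eq]; omega, hadj⟩
  · intro u
    have hset : {w | w ∈ ({v | τ v ≤ t + 1} : Set V) \ {v | τ v ≤ t} ∧ par w = u}
        = {w | τ w = t + 1 ∧ par w = u} := by
      ext w; simp only [Set.mem_diff, Set.mem_setOf_eq]; constructor
      · rintro ⟨⟨ha, hb⟩, h3⟩; exact ⟨by omega, h3⟩
      · rintro ⟨ha, h3⟩; exact ⟨⟨by omega, by omega⟩, h3⟩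
    rw [hset]; exact h2 u t

lemma ncard_le_one_of_subsingleton {V : Type*} {s : Set V} (h : s.Subsingleton) :
    s.ncard ≤ 1 := by
  rcases h.eq_empty_or_singleton with rfl | ⟨x, rfl⟩
  · simp
  · simp

lemma mem_sched {V : Type*} (G : SimpleGraph V) (s : V) (τ : V → ℕ) (par : V → V)
    (h0 : ∀ v, τ v = 0 ↔ v = s)
    (h1 : ∀ v, τ v ≠ 0 → G.Adj (par v) v ∧ τ (par v) < τ v)
    (h2 : ∀ u t, ({w | τ w = t + 1 ∧ par w = u} : Set V).ncard ≤ 1)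
    (R : ℕ) (hR : ∀ v, τ v ≤ R) :
    R ∈ {R | ∃ S : ℕ → Set V, S 0 = {s} ∧ IsSchedule G S ∧ S R = Set.univ} := by
  refine ⟨fun t => {v | τ v ≤ t}, ?_, isSchedule_of_time G τ par h1 h2, ?_⟩
  · ext v; simp [Nat.le_zero, h0]
  · ext v; simp [hR v]

section Path

def ppar (n : ℕ) : Fin n → Fin n := fun v =>
  if v.val = 0 then v else ⟨v.val - 1, Nat.lt_of_le_of_lt (Nat.sub_le _ _) v.isLt⟩

lemma path_mem (n : ℕ) (hn : 1 ≤ n) :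
    (n - 1) ∈ {R | ∃ S : ℕ → Set (Fin n), S 0 = {(⟨0, hn⟩ : Fin n)} ∧
      IsSchedule (SimpleGraph.pathGraph n) S ∧ S R = Set.univ} := by
  refine mem_sched _ _ (fun v => v.val) (ppar n) ?_ ?_ ?_ (n - 1) ?_
  · intro v; constructor
    · intro h; exact Fin.ext h
    · intro h; subst h; rfl
  · intro v hv
    have hv' : v.val ≠ 0 := hv
    unfold ppar
    rw [if_neg hv']
    refine ⟨?_, by show v.val - 1 < v.val; omega⟩
    rw [SimpleGraph.pathGraph_adj]
    left; show v.val - 1 + 1 = v.val; omega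
  · intro u t
    apply ncard_le_one_of_subsingleton
    intro a ha b hb
    simp only [Set.mem_setOf_eq] at ha hb
    exact Fin.ext (ha.1.trans hb.1.symm)
  · intro v; exact Nat.le_sub_one_of_lt v.isLt

lemma path_broadcast (n : ℕ) (hn : 1 ≤ n) :
    broadcastTime (SimpleGraph.pathGraph n) ⟨0, hn⟩ = n - 1 := by
  have hmem := path_mem n hn
  apply le_antisymm (Nat.sInf_le hmem)
  apply le_csInf ⟨_, hmem⟩
  rintro R ⟨S, hS0, hsch, hSR⟩
  have key : ∀ t : ℕ, ∀ i ∈ S t, (i : Fin n).val ≤ t := by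
    intro t
    induction t with
    | zero => intro i hi; rw [hS0] at hi; simp only [Set.mem_singleton_iff] at hi
              subst hi; simp
    | succ t ih =>
      intro i hi
      by_cases h : i ∈ S t
      · exact Nat.le_succ_of_le (ih i h)
      · obtain ⟨_, f, hf, _⟩ := hsch t
        obtain ⟨hfs, hadj⟩ := hf i ⟨hi, h⟩
        have := ih (f i) hfs
        rw [SimpleGraph.pathGraph_adj] at hadj
        omega
  have := key R ⟨n - 1, by omega⟩ (by rw [hSR]; trivial)
  simpa using this

end Path

section Fan

def qf (R s : ℕ) : ℕ := ∑ j ∈ Finset.range s, (R - j)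

lemma qf_succ (R s : ℕ) : qf R (s + 1) = qf R s + (R - s) := by
  simp [qf, Finset.sum_range_succ]

lemma qf_mono (R : ℕ) : Monotone (qf R) := by
  intro a b hab
  exact Finset.sum_le_sum_of_subset (Finset.range_subset_range.2 hab)

lemma qf_self (R : ℕ) : 2 * qf R R = R * (R + 1) := by
  induction R with
  | zero => simp [qf]
  | succ k ih =>
    have h : qf (k + 1) (k + 1) = qf k k + (k + 1) := by
      rw [qf, Finset.sum_range_succ]
      have hc : ∀ j ∈ Finset.range k, (k + 1) - j = (k - j) + 1 := fun j hj => by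
        have := Finset.mem_range.mp hj; omega
      rw [Finset.sum_congr rfl hc, Finset.sum_add_distrib]
      simp [qf]
      omega
    rw [h]; ring_nf; ring_nf at ih; omega

def blk (R i : ℕ) : ℕ := Nat.findGreatest (fun s => qf R s ≤ i) R

lemma blk_le (R i : ℕ) : blk R i ≤ R := Nat.findGreatest_le R

lemma qf_blk_le (R i : ℕ) : qf R (blk R i) ≤ i :=
  Nat.findGreatest_spec (P := fun s => qf R s ≤ i) (Nat.zero_le R) (by simp [qf])

lemma blk_lt {R n i : ℕ} (hn : n ≤ qf R R) (hi : i < n) : blk R i < R := by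
  rcases Nat.lt_or_ge (blk R i) R with h | h
  · exact h
  · exfalso
    have h1 : blk R i = R := le_antisymm (blk_le R i) h
    have := qf_blk_le R i
    rw [h1] at this
    omega

lemma lt_qf_blk_succ {R n i : ℕ} (hn : n ≤ qf R R) (hi : i < n) :
    i < qf R (blk R i + 1) := by
  by_contra h
  push_neg at h
  have h2 : blk R i + 1 ≤ blk R i := by
    unfold blk
    exact Nat.le_findGreatest (blk_lt hn hi) h
  omega

lemma blk_eq {R i s : ℕ} (hs : s < R) (hq1 : qf R s ≤ i) (hq2 : i < qf R (s + 1)) :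
    blk R i = s := by
  have hge : s ≤ blk R i := Nat.le_findGreatest (le_of_lt hs) hq1
  rcases Nat.lt_or_ge s (blk R i) with h | h
  · exfalso
    have h1 : qf R (s + 1) ≤ qf R (blk R i) := qf_mono R h
    have h2 := qf_blk_le R i
    omega
  · omega

/-- time of vertex `i` in the fan schedule -/
def tfan (R i : ℕ) : ℕ := blk R i + 1 + (i - qf R (blk R i))

lemma tfan_le {R n i : ℕ} (hn : n ≤ qf R R) (hi : i < n) : tfan R i ≤ R := by
  have h1 := lt_qf_blk_succ hn hi
  have h2 := qf_blk_le R i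
  have h3 := blk_lt hn hi
  rw [qf_succ] at h1
  unfold tfan
  omega

lemma tfan_pred {R n i : ℕ} (hn : n ≤ qf R R) (hi : i < n)
    (hh : qf R (blk R i) < i) : tfan R (i - 1) + 1 = tfan R i := by
  have h1 := lt_qf_blk_succ hn hi
  have h2 := qf_blk_le R i
  have hb : blk R (i - 1) = blk R i :=
    blk_eq (blk_lt hn hi) (by omega) (by omega)
  unfold tfan
  rw [hb]
  omega

def fpar (n R : ℕ) : Option (Fin n) → Option (Fin n)
  | none => none
  | some i => if i.val = qf R (blk R i.val) then none
      else some ⟨i.val - 1, Nat.lt_of_le_of_lt (Nat.sub_le _ _) i.isLt⟩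

lemma fan_adj_none {n : ℕ} (i : Fin n) : (fanGraph n).Adj none (some i) := by
  refine ⟨by simp, Or.inl (Or.inr ⟨rfl, i, rfl⟩)⟩

lemma fan_adj_pred {n : ℕ} (i j : Fin n) (h : (i : ℕ) + 1 = j) :
    (fanGraph n).Adj (some i) (some j) := by
  refine ⟨?_, Or.inl (Or.inl ⟨i, j, rfl, rfl, h⟩)⟩
  intro hc
  have : (i : ℕ) = j := by
    have := Option.some_injective _ hc
    exact congrArg Fin.val this
  omega

lemma fan_mem (n : ℕ) (hn : 1 ≤ n) {R : ℕ} (hR1 : n ≤ qf R R) :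
    R ∈ {R | ∃ S : ℕ → Set (Option (Fin n)), S 0 = {none} ∧
      IsSchedule (fanGraph n) S ∧ S R = Set.univ} := by
  refine mem_sched _ _ (fun x => Option.elim x 0 (fun i => tfan R i.val))
    (fpar n R) ?_ ?_ ?_ R ?_
  · rintro (_ | i)
    · simp
    · simp only [Option.elim]
      constructor
      · intro h; exfalso; unfold tfan at h; omega
      · intro h; exact absurd h (by simp)
  · rintro (_ | i) hv
    · simp at hv
    · simp only [Option.elim] at hv ⊢
      by_cases hh : i.val = qf R (blk R i.val)
      · show (fanGraph n).Adj (fpar n R (some i)) (some i) ∧ _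
        rw [show fpar n R (some i) = none by simp only [fpar]; rw [if_pos hh]]
        refine ⟨fan_adj_none i, ?_⟩
        simp only [Option.elim]
        unfold tfan; omega
      · have hlt : qf R (blk R i.val) < i.val :=
          lt_of_le_of_ne (qf_blk_le R i.val) (Ne.symm hh)
        show (fanGraph n).Adj (fpar n R (some i)) (some i) ∧ _
        rw [show fpar n R (some i) =
          some ⟨i.val - 1, Nat.lt_of_le_of_lt (Nat.sub_le _ _) i.isLt⟩ by
            simp only [fpar]; rw [if_neg hh]]
        constructor
        · exact fan_adj_pred _ _ (by show i.val - 1 + 1 = i.val; omega)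
        · simp only [Option.elim]
          have := tfan_pred hR1 i.isLt hlt
          show tfan R (i.val - 1) < tfan R i.val
          omega
  · intro u t
    apply ncard_le_one_of_subsingleton
    intro a ha b hb
    simp only [Set.mem_setOf_eq] at ha hb
    -- both a and b are `some` of the vertex with value determined by u and t
    have hval : ∀ w : Option (Fin n),
        (Option.elim w 0 (fun i => tfan R i.val) = t + 1 ∧ fpar n R w = u) →
        ∃ i : Fin n, w = some i ∧ tfan R i.val = t + 1 ∧ fpar n R (some i) = u := by
      rintro (_ | i) ⟨h1, h2⟩
      · simp at h1
      · exact ⟨i, rfl, h1, h2⟩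
    obtain ⟨i, rfl, hi1, hi2⟩ := hval a ha
    obtain ⟨j, rfl, hj1, hj2⟩ := hval b hb
    have : i.val = j.val := by
      by_cases hh : i.val = qf R (blk R i.val) <;>
        by_cases hh' : j.val = qf R (blk R j.val)
      · -- both heads: blk = t for both, so value = qf R t
        have e1 : tfan R i.val = blk R i.val + 1 := by unfold tfan; omega
        have e2 : tfan R j.val = blk R j.val + 1 := by unfold tfan; omega
        have bi : blk R i.val = t := by omega
        have bj : blk R j.val = t := by omega
        rw [bi] at hh; rw [bj] at hh'
        omega
      · exfalso
        simp only [fpar, if_pos hh, if_neg hh'] at hi2 hj2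
        rw [← hj2] at hi2; exact (Option.some_ne_none _ hi2.symm)
      · exfalso
        simp only [fpar, if_neg hh, if_pos hh'] at hi2 hj2
        rw [← hj2] at hi2; exact (Option.some_ne_none _ hi2)
      · simp only [fpar, if_neg hh, if_neg hh'] at hi2 hj2
        rw [← hj2] at hi2
        have := Option.some_injective _ hi2
        have hv : i.val - 1 = j.val - 1 := congrArg Fin.val this
        have hq1 := qf_blk_le R i.val
        have hq2 := qf_blk_le R j.val
        omega
    exact congrArg some (Fin.ext this)
  · rintro (_ | i)
    · simp
    · exact tfan_le hR1 i.isLt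

end Fan

lemma nat_sqrt_le_real (m : ℕ) : (Nat.sqrt m : ℝ) ≤ Real.sqrt m := by
  have h : ((Nat.sqrt m : ℝ)) ^ 2 ≤ (m : ℝ) := by
    exact_mod_cast Nat.sqrt_le' m
  nlinarith [Real.sq_sqrt (by positivity : (0:ℝ) ≤ (m:ℝ)), Real.sqrt_nonneg (m:ℝ),
    Nat.cast_nonneg (α := ℝ) (Nat.sqrt m)]

lemma fan_upper (n : ℕ) (hn : 1 ≤ n) :
    (broadcastTime (fanGraph n) none : ℝ) ≤ 1.5 * Real.sqrt n + 2 := by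
  set R := Nat.sqrt (2 * n) + 1 with hRdef
  have hqRR : n ≤ qf R R := by
    have h2 : 2 * n < R * R := by
      have h := Nat.lt_succ_sqrt' (2 * n)
      calc 2 * n < (Nat.sqrt (2*n)).succ ^ 2 := h
        _ = R * R := by rw [hRdef]; simp [Nat.succ_eq_add_one]; ring
    have h3 : R * R ≤ R * (R + 1) := Nat.mul_le_mul_left _ (by omega)
    have h4 := qf_self R
    omega
  have hle : broadcastTime (fanGraph n) none ≤ R := Nat.sInf_le (fan_mem n hn hqRR)
  have hcast : (broadcastTime (fanGraph n) none : ℝ) ≤ (R : ℝ) := by exact_mod_cast hle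
  have hsq : (Nat.sqrt (2 * n) : ℝ) ≤ Real.sqrt 2 * Real.sqrt n := by
    have h1 := nat_sqrt_le_real (2 * n)
    have h2 : ((2 * n : ℕ) : ℝ) = 2 * (n : ℝ) := by push_cast; ring
    rw [h2] at h1
    rw [← Real.sqrt_mul (by norm_num : (0:ℝ) ≤ 2)]
    exact h1
  have hs2 : Real.sqrt 2 ≤ 1.5 := by
    nlinarith [Real.sq_sqrt (by norm_num : (0:ℝ) ≤ 2), Real.sqrt_nonneg 2]
  have hsn : (0:ℝ) ≤ Real.sqrt n := Real.sqrt_nonneg _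
  have hRcast : (R : ℝ) = (Nat.sqrt (2 * n) : ℝ) + 1 := by
    rw [hRdef]; push_cast; ring
  calc (broadcastTime (fanGraph n) none : ℝ) ≤ (R : ℝ) := hcast
    _ = (Nat.sqrt (2 * n) : ℝ) + 1 := hRcast
    _ ≤ Real.sqrt 2 * Real.sqrt n + 1 := by linarith
    _ ≤ 1.5 * Real.sqrt n + 2 := by nlinarith

theorem fan_graph_broadcast :
    (∀ n : ℕ, ∀ hn : 1 ≤ n,
      (broadcastTime (fanGraph n) none : ℝ) ≤ 1.5 * Real.sqrt n + 2 ∧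
      broadcastTime (SimpleGraph.pathGraph n) ⟨0, by omega⟩ = n - 1) ∧
    ∃ c : ℝ, 0 < c ∧ ∃ N : ℕ, ∀ n : ℕ, ∀ hn : N ≤ n, ∀ hn1 : 1 ≤ n,
      c * (broadcastTime (fanGraph n) none : ℝ) ^ 2 ≤
        (broadcastTime (SimpleGraph.pathGraph n) ⟨0, by omega⟩ : ℝ) := by
  constructor
  · intro n hn
    exact ⟨fan_upper n hn, path_broadcast n hn⟩
  · refine ⟨1/100, by norm_num, 2, fun n hn hn1 => ?_⟩
    have hB := fan_upper n hn1
    rw [path_broadcast n hn1]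
    have hs : Real.sqrt n ^ 2 = n := Real.sq_sqrt (by positivity)
    have hs1 : (1:ℝ) ≤ Real.sqrt n := by
      rw [show (1:ℝ) = Real.sqrt 1 by simp]
      exact Real.sqrt_le_sqrt (by exact_mod_cast hn1)
    have hcast : ((n - 1 : ℕ) : ℝ) = (n : ℝ) - 1 := by
      rw [Nat.cast_sub hn1]; simp
    rw [hcast]
    have hn2 : (2:ℝ) ≤ (n:ℝ) := by exact_mod_cast hn
    have hB0 : (0:ℝ) ≤ (broadcastTime (fanGraph n) none : ℝ) := by positivity
    nlinarith [sq_nonneg (Real.sqrt n)]
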